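/- Any quasi-Clifford algebraic curvature tensor is Osserman. That is, if R = μ₀R⁰ + Σ_{i=1}^m μᵢR^{Jᵢ} on a scalar product space (V,g) with a quasi-Clifford family J₁,…,J_m, then the characteristic polynomial of the Jacobi operator 𝒥_X is the same for all unit timelike X, and the same for all unit spacelike X. -/

import Mathlib

open Module Finset Polynomial

/-- The algebraic curvature tensor `R⁰` of constant sectional curvature one. -/
def R0 {V : Type*} [AddCommGroup V] [Module ℝ V] (g : LinearMap.BilinForm ℝ V)
    (X Y Z W : V) : ℝ :=
  g Y Z * g X W - g X Z * g Y W

/-- The algebraic curvature tensor `R^J` generated by a `g`-skew-adjoint endomorphism `J`. -/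
def RJ {V : Type*} [AddCommGroup V] [Module ℝ V] (g : LinearMap.BilinForm ℝ V)
    (J : V →ₗ[ℝ] V) (X Y Z W : V) : ℝ :=
  g (J X) Z * g (J Y) W - g (J Y) Z * g (J X) W + 2 * g (J X) Y * g (J Z) W

lemma charpoly_key {V : Type*} [AddCommGroup V] [Module ℝ V] [FiniteDimensional ℝ V]
    {N : ℕ} (r : ℝ)
    (A A' : (Fin N → ℝ) →ₗ[ℝ] V) (B B' : V →ₗ[ℝ] (Fin N → ℝ))
    (h : B ∘ₗ A = B' ∘ₗ A') :
    (r • (LinearMap.id : V →ₗ[ℝ] V) - A ∘ₗ B).charpoly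
      = (r • (LinearMap.id : V →ₗ[ℝ] V) - A' ∘ₗ B').charpoly := by
  classical
  set n := finrank ℝ V with hn
  let b := Module.finBasis ℝ V
  let e := Pi.basisFun ℝ (Fin N)
  let K := FractionRing (Polynomial ℝ)
  let φ : Polynomial ℝ →+* K := algebraMap (Polynomial ℝ) K
  have hφ : Function.Injective φ := IsFractionRing.injective _ _
  let ψ : ℝ →+* K := φ.comp Polynomial.C
  let s : K := φ Polynomial.X - ψ r
  have hs : s ≠ 0 := by
    have h1 : (Polynomial.X - Polynomial.C r : Polynomial ℝ) ≠ 0 := Polynomial.X_sub_C_ne_zero r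
    intro hh
    exact h1 (hφ (by rwa [map_zero, map_sub]))
  have hcm : ∀ (P : Matrix (Fin n) (Fin n) ℝ),
      (Matrix.charmatrix (r • 1 - P)).map φ = s • 1 + P.map ψ := by
    intro P
    ext i j
    by_cases hij : i = j
    · subst hij
      simp only [Matrix.map_apply, Matrix.charmatrix_apply_eq, Matrix.sub_apply,
        Matrix.smul_apply, Matrix.one_apply_eq, Matrix.add_apply, map_sub, s, ψ]
      ring_nf
      simp [mul_comm]
      ring
    · simp only [Matrix.map_apply, Matrix.charmatrix_apply_ne _ _ _ hij, Matrix.sub_apply,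
        Matrix.smul_apply, Matrix.one_apply_ne hij, Matrix.add_apply, map_sub, map_neg, s, ψ]
      simp
      ring
  have key : ∀ (A : (Fin N → ℝ) →ₗ[ℝ] V) (B : V →ₗ[ℝ] (Fin N → ℝ)),
      φ ((r • (LinearMap.id : V →ₗ[ℝ] V) - A ∘ₗ B).charpoly)
        = s ^ n * (s⁻¹) ^ N *
          (s • (1 : Matrix (Fin N) (Fin N) K)
            + (LinearMap.toMatrix e e (B ∘ₗ A)).map ψ).det := by
    intro A B
    rw [← LinearMap.charpoly_toMatrix _ b]
    have hM : LinearMap.toMatrix b b (r • (LinearMap.id : V →ₗ[ℝ] V) - A ∘ₗ B)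
        = r • 1 - (LinearMap.toMatrix e b A) * (LinearMap.toMatrix b e B) := by
      rw [map_sub, map_smul, LinearMap.toMatrix_id, LinearMap.toMatrix_comp b e b]
    rw [hM, Matrix.charpoly, RingHom.map_det, RingHom.mapMatrix_apply, hcm]
    set MA := (LinearMap.toMatrix e b A).map ψ
    set MB := (LinearMap.toMatrix b e B).map ψ
    have hmap : (LinearMap.toMatrix e b A * LinearMap.toMatrix b e B).map ψ = MA * MB :=
      Matrix.map_mul
    rw [hmap]
    have h1 : s • (1 : Matrix (Fin n) (Fin n) K) + MA * MB
        = s • (1 + (s⁻¹ • MA) * MB) := by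
      rw [smul_add, Matrix.smul_mul, smul_smul, mul_inv_cancel₀ hs, one_smul]
    rw [h1, Matrix.det_smul, Matrix.det_one_add_mul_comm]
    have h2 : (1 : Matrix (Fin N) (Fin N) K) + MB * (s⁻¹ • MA)
        = s⁻¹ • (s • 1 + MB * MA) := by
      rw [smul_add, smul_smul, inv_mul_cancel₀ hs, one_smul, Matrix.mul_smul]
    rw [h2, Matrix.det_smul]
    have h3 : (LinearMap.toMatrix e e (B ∘ₗ A)).map ψ = MB * MA := by
      rw [LinearMap.toMatrix_comp e b e, Matrix.map_mul]
    rw [h3]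
    simp [mul_assoc]
    exact Or.inl rfl
  apply hφ
  rw [key A B, key A' B', h]

/-- any quasi-Clifford algebraic curvature tensor is Osserman: the
characteristic polynomial of the Jacobi operator is independent of the unit timelike
(resp. unit spacelike) vector. -/
theorem quasiClifford_osserman
    {V : Type*} [AddCommGroup V] [Module ℝ V] [FiniteDimensional ℝ V]
    (g : LinearMap.BilinForm ℝ V) (hsymm : ∀ x y, g x y = g y x) (hnd : g.Nondegenerate)
    {m : ℕ} (μ₀ : ℝ) (μ c : Fin m → ℝ) (J : Fin m → V →ₗ[ℝ] V)
    (hskew : ∀ i, ∀ x y : V, g (J i x) y = - g x (J i y))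
    (hhur : ∀ i j, J i ∘ₗ J j + J j ∘ₗ J i
      = ((if i = j then 2 * c i else 0 : ℝ) • LinearMap.id : V →ₗ[ℝ] V))
    (R : V → V → V → V → ℝ)
    (hR : ∀ X Y Z W, R X Y Z W = μ₀ * R0 g X Y Z W + ∑ i, μ i * RJ g (J i) X Y Z W)
    (Jac : V → V →ₗ[ℝ] V)
    (hJac : ∀ X Y Z, g (Jac X Y) Z = R Y X X Z) :
    (∀ X X' : V, g X X = -1 → g X' X' = -1 → (Jac X).charpoly = (Jac X').charpoly) ∧
    (∀ X X' : V, g X X = 1 → g X' X' = 1 → (Jac X).charpoly = (Jac X').charpoly) := by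
  classical
  have F1 : ∀ (i : Fin m) (X : V), g (J i X) X = 0 := by
    intro i X
    have h1 := hskew i X X
    have h2 := hsymm X (J i X)
    linarith
  have F2 : ∀ (i : Fin m) (X Y : V), g (J i Y) X = - g (J i X) Y := by
    intro i X Y
    rw [hskew i Y X, hsymm Y (J i X)]
  have F3 : ∀ (i j : Fin m) (X : V),
      g (J i X) (J j X) = (if i = j then -c i else 0) * g X X := by
    intro i j X
    have hc := congrArg (fun (f : V →ₗ[ℝ] V) => g X (f X)) (hhur i j)
    simp only [LinearMap.add_apply, LinearMap.comp_apply, map_add, LinearMap.smul_apply,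
      LinearMap.id_apply, map_smul, smul_eq_mul] at hc
    have e1 : g (J i X) (J j X) = - g X (J i (J j X)) := hskew i X (J j X)
    have e2 : g (J j X) (J i X) = - g X (J j (J i X)) := hskew j X (J i X)
    have e3 : g (J i X) (J j X) = g (J j X) (J i X) := hsymm _ _
    split_ifs at hc ⊢ with hij
    · linear_combination (e1 + e2 + e3 - hc) / 2
    · linear_combination (e1 + e2 + e3 - hc) / 2
  set a : Fin (m + 1) → ℝ := Fin.cons μ₀ (fun i => 3 * μ i) with ha
  set d : Fin (m + 1) → ℝ := Fin.cons 1 (fun i => - c i) with hd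
  set w : V → Fin (m + 1) → V := fun X => Fin.cons X (fun i => J i X) with hw
  have Fgram : ∀ (X : V) (j k : Fin (m + 1)),
      g (w X j) (w X k) = (if j = k then d j else 0) * g X X := by
    intro X j k
    induction j using Fin.cases with
    | zero =>
      induction k using Fin.cases with
      | zero => simp [hw, hd]
      | succ k =>
        have : g X (J k X) = 0 := by rw [hsymm]; exact F1 k X
        simp [hw, hd, this, (Fin.succ_ne_zero k).symm]
    | succ j =>
      induction k using Fin.cases with
      | zero => simp [hw, hd, F1, Fin.succ_ne_zero j]
      | succ k =>
        have : (Fin.succ j = Fin.succ k) = (j = k) := by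
          simp [Fin.succ_inj]
        simp [hw, hd, F3 j k X, this]
  let e := Pi.basisFun ℝ (Fin (m + 1))
  let AX : V → (Fin (m + 1) → ℝ) →ₗ[ℝ] V := fun X => e.constr ℝ (w X)
  let BX : V → V →ₗ[ℝ] (Fin (m + 1) → ℝ) := fun X => LinearMap.pi (fun j => a j • g (w X j))
  have hA : ∀ (X : V) (x : Fin (m + 1) → ℝ), AX X x = ∑ j, x j • w X j := by
    intro X x
    simp [AX, Basis.constr_apply_fintype, e]
  have hB : ∀ (X Y : V) (j : Fin (m + 1)), BX X Y j = a j * g (w X j) Y := by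
    intro X Y j
    simp [BX]
  have F4 : ∀ X : V, Jac X = (μ₀ * g X X) • LinearMap.id - (AX X) ∘ₗ (BX X) := by
    intro X
    apply LinearMap.ext; intro Y
    have h0 : ∀ Z, g (Jac X Y) Z
        = g ((((μ₀ * g X X) • LinearMap.id - AX X ∘ₗ BX X : V →ₗ[ℝ] V)) Y) Z := by
      intro Z
      have lhs_eq : g (Jac X Y) Z = μ₀ * g X X * g Y Z - μ₀ * g X Y * g X Z
          - ∑ i, 3 * μ i * (g (J i X) Y * g (J i X) Z) := by
        rw [hJac, hR]
        simp only [R0, RJ]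
        have hterm : ∀ i : Fin m, μ i *
            (g (J i Y) X * g (J i X) Z - g (J i X) X * g (J i Y) Z
              + 2 * g (J i Y) X * g (J i X) Z)
            = -(3 * μ i * (g (J i X) Y * g (J i X) Z)) := by
          intro i
          rw [F1, F2]
          ring
        rw [Finset.sum_congr rfl (fun i _ => hterm i), Finset.sum_neg_distrib, hsymm Y X]
        ring
      have rhs_eq : g ((((μ₀ * g X X) • LinearMap.id - AX X ∘ₗ BX X : V →ₗ[ℝ] V)) Y) Z
          = μ₀ * g X X * g Y Z - μ₀ * g X Y * g X Z
          - ∑ i, 3 * μ i * (g (J i X) Y * g (J i X) Z) := by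
        simp only [LinearMap.sub_apply, LinearMap.smul_apply, LinearMap.id_apply,
          LinearMap.comp_apply, map_sub, map_smul, LinearMap.sub_apply, smul_eq_mul]
        have expand : g ((AX X) ((BX X) Y)) Z
            = ∑ j, a j * g (w X j) Y * g (w X j) Z := by
          rw [hA]
          rw [map_sum, LinearMap.sum_apply]
          refine Finset.sum_congr rfl fun j _ => ?_
          rw [hB, map_smul, LinearMap.smul_apply, smul_eq_mul]
        have tail : ∑ i : Fin m, a i.succ * g (w X i.succ) Y * g (w X i.succ) Z
            = ∑ i, 3 * μ i * (g (J i X) Y * g (J i X) Z) :=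
          Finset.sum_congr rfl fun i _ => by simp only [hw, ha, Fin.cons_succ]; ring
        rw [expand, Fin.sum_univ_succ, tail]
        simp only [hw, ha, Fin.cons_zero]
        ring
      rw [lhs_eq, rhs_eq]
    have h1 := hnd.1 (Jac X Y - (((μ₀ * g X X) • LinearMap.id - AX X ∘ₗ BX X : V →ₗ[ℝ] V)) Y) (fun Z => by
      rw [map_sub, LinearMap.sub_apply, h0 Z, sub_self])
    exact sub_eq_zero.mp h1
  have F5 : ∀ X : V, (BX X) ∘ₗ (AX X)
      = (g X X) • (LinearMap.pi (fun j => (a j * d j) • LinearMap.proj j)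
          : (Fin (m + 1) → ℝ) →ₗ[ℝ] (Fin (m + 1) → ℝ)) := by
    intro X
    apply LinearMap.ext; intro x
    funext j
    have : (BX X) ((AX X) x) j = a j * g (w X j) ((AX X) x) := hB X _ j
    rw [LinearMap.comp_apply, this, hA, map_sum]
    simp only [map_smul, smul_eq_mul, Fgram X]
    simp only [mul_ite, ite_mul, zero_mul, mul_zero, Finset.sum_ite_eq, Finset.mem_univ,
      if_true, LinearMap.smul_apply, Pi.smul_apply, LinearMap.pi_apply,
      LinearMap.proj_apply, smul_eq_mul]
    ring
  have main : ∀ X X' : V, g X X = g X' X' → (Jac X).charpoly = (Jac X').charpoly := by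
    intro X X' hxx
    rw [F4 X, F4 X', hxx]
    exact charpoly_key (μ₀ * g X' X') _ _ _ _ (by rw [F5 X, F5 X', hxx])
  exact ⟨fun X X' h h' => main X X' (h.trans h'.symm),
    fun X X' h h' => main X X' (h.trans h'.symm)⟩
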